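/- In the indeterminate case, the coefficient diagonal c_k = √(a_{k,k}) = (Σ_{n=k}^∞ |b_{k,n}|²)^{1/2} satisfies lim_{k→∞} k · c_k^{1/k} = 0. -/

import Mathlib

open MeasureTheory Polynomial Filter Finset

section Aux
variable {μ : Measure ℝ}

lemma intR (hmom : ∀ n : ℕ, Integrable (fun x => x ^ n) μ) (p : Polynomial ℝ) :
    Integrable (fun x => p.eval x) μ := by
  have : (fun x => p.eval x) = fun x => ∑ i ∈ range (p.natDegree + 1), p.coeff i * x ^ i := by
    funext x; exact eval_eq_sum_range x
  rw [this]
  exact integrable_finset_sum _ (fun i _ => (hmom i).const_mul _)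

lemma intC (hmom : ∀ n : ℕ, Integrable (fun x => x ^ n) μ) (q : Polynomial ℂ) :
    Integrable (fun x : ℝ => q.eval (x : ℂ)) μ := by
  have : (fun x : ℝ => q.eval (x : ℂ))
      = fun x : ℝ => ∑ i ∈ range (q.natDegree + 1), q.coeff i * ((x ^ i : ℝ) : ℂ) := by
    funext x; rw [eval_eq_sum_range]; push_cast; ring_nf; exact Finset.sum_congr rfl (fun i _ => by ring)
  rw [this]
  exact integrable_finset_sum _ (fun i _ => ((hmom i).ofReal.const_mul _))

lemma evalPc (p : Polynomial ℝ) (x : ℝ) :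
    (p.map (algebraMap ℝ ℂ)).eval (x : ℂ) = ((p.eval x : ℝ) : ℂ) := by
  rw [eval_map]
  exact eval₂_at_apply (algebraMap ℝ ℂ) x

lemma aevalPc (p : Polynomial ℝ) (x : ℝ) :
    Polynomial.aeval (x : ℂ) p = ((p.eval x : ℝ) : ℂ) := by
  rw [aeval_def, ← eval_map, evalPc]

lemma intPq (hmom : ∀ n : ℕ, Integrable (fun x => x ^ n) μ) (p : Polynomial ℝ) (q : Polynomial ℂ) :
    Integrable (fun x : ℝ => ((p.eval x : ℝ) : ℂ) * q.eval (x : ℂ)) μ := by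
  have := intC hmom (p.map (algebraMap ℝ ℂ) * q)
  simpa [eval_mul, evalPc, aevalPc] using this

lemma intPP (hmom : ∀ n : ℕ, Integrable (fun x => x ^ n) μ) (p p' : Polynomial ℝ) :
    Integrable (fun x : ℝ => ((p.eval x : ℝ) : ℂ) * ((p'.eval x : ℝ) : ℂ)) μ := by
  have := intPq hmom p (p'.map (algebraMap ℝ ℂ))
  simpa [evalPc, aevalPc] using this

variable (μ) in
lemma horthC (P : ℕ → Polynomial ℝ)
    (horth : ∀ n m, ∫ x, (P n).eval x * (P m).eval x ∂μ = if n = m then 1 else 0)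
    (n m : ℕ) :
    ∫ x, (((P n).eval x : ℝ) : ℂ) * (((P m).eval x : ℝ) : ℂ) ∂μ
      = if n = m then 1 else 0 := by
  have h1 : (fun x => (((P n).eval x : ℝ) : ℂ) * (((P m).eval x : ℝ) : ℂ))
      = fun x => (((P n).eval x * (P m).eval x : ℝ) : ℂ) := by
    funext x; push_cast; ring
  rw [h1]
  have h2 : ∫ x, (((P n).eval x * (P m).eval x : ℝ) : ℂ) ∂μ
      = ((∫ x, (P n).eval x * (P m).eval x ∂μ : ℝ) : ℂ) := integral_ofReal
  rw [h2, horth n m]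
  split <;> norm_num

variable (μ) in
lemma orthC (hmom : ∀ n : ℕ, Integrable (fun x => x ^ n) μ)
    (P : ℕ → Polynomial ℝ)
    (hdeg : ∀ n, (P n).natDegree = n)
    (hlead : ∀ n, 0 < (P n).leadingCoeff)
    (horth : ∀ n m, ∫ x, (P n).eval x * (P m).eval x ∂μ = if n = m then 1 else 0) :
    ∀ d n, d < n → ∀ q : Polynomial ℂ, q.natDegree ≤ d →
      ∫ x, (((P n).eval x : ℝ) : ℂ) * q.eval (x : ℂ) ∂μ = 0 := by
  intro d
  induction d using Nat.strong_induction_on with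
  | _ d IH =>
    intro n hdn q hq
    rcases eq_or_ne q 0 with rfl | hq0
    · simp
    · have hlc : (((P d).leadingCoeff : ℝ) : ℂ) ≠ 0 := by
        exact_mod_cast (hlead d).ne'
      obtain ⟨a, ha⟩ : ∃ a : ℂ, a = ((((P d).leadingCoeff : ℝ) : ℂ))⁻¹ * q.coeff d := ⟨_, rfl⟩
      obtain ⟨q', hq'⟩ : ∃ q' : Polynomial ℂ,
          q' = q - Polynomial.C a * (P d).map (algebraMap ℝ ℂ) := ⟨_, rfl⟩
      have hPcdeg : ((P d).map (algebraMap ℝ ℂ)).natDegree = d := by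
        rw [natDegree_map (algebraMap ℝ ℂ)]; exact hdeg d
      have h1 : ((P d).map (algebraMap ℝ ℂ)).coeff d = (((P d).leadingCoeff : ℝ) : ℂ) := by
        have hld : (P d).coeff d = (P d).leadingCoeff := by
          rw [Polynomial.leadingCoeff, hdeg d]
        rw [coeff_map, hld]
        rfl
      have hcoeffd : q'.coeff d = 0 := by
        rw [hq', coeff_sub, coeff_C_mul, h1, ha]
        field_simp; simp
      have hq'deg : q'.natDegree ≤ d := by
        rw [hq']
        apply le_trans (natDegree_sub_le _ _)
        simp only [max_le_iff]
        exact ⟨hq, le_trans (natDegree_mul_le) (by simp [hPcdeg])⟩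
      have hsplit : q = q' + Polynomial.C a * (P d).map (algebraMap ℝ ℂ) := by
        rw [hq']; ring
      have hint1 : Integrable (fun x => (((P n).eval x : ℝ) : ℂ) * q'.eval (x:ℂ)) μ :=
        intPq hmom _ _
      have hint2 : Integrable
          (fun x : ℝ => a * ((((P n).eval x : ℝ) : ℂ) * (((P d).eval x : ℝ) : ℂ))) μ :=
        (intPP hmom (P n) (P d)).const_mul a
      have key : ∫ x, (((P n).eval x : ℝ) : ℂ) * q.eval (x:ℂ) ∂μ
          = (∫ x, (((P n).eval x : ℝ) : ℂ) * q'.eval (x:ℂ) ∂μ)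
            + a * ∫ x, (((P n).eval x : ℝ) : ℂ) * (((P d).eval x : ℝ) : ℂ) ∂μ := by
        rw [← integral_const_mul, ← integral_add hint1 hint2]
        congr 1
        funext x
        conv_lhs => rw [hsplit]
        simp only [eval_add, eval_mul, eval_C, evalPc]
        ring
      rw [key]
      have horthnd : ∫ x, (((P n).eval x : ℝ) : ℂ) * (((P d).eval x : ℝ) : ℂ) ∂μ = 0 := by
        rw [horthC μ P horth n d, if_neg (by omega)]
      rw [horthnd, mul_zero, add_zero]
      rcases eq_or_ne q' 0 with h0 | h0
      · simp [h0]
      · have hlt : q'.natDegree < d := by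
          rcases lt_or_eq_of_le hq'deg with h | h
          · exact h
          · exfalso
            have := Polynomial.leadingCoeff_ne_zero.mpr h0
            rw [Polynomial.leadingCoeff, h] at this
            exact this hcoeffd
        exact IH q'.natDegree hlt n (lt_trans hlt hdn) q' le_rfl

variable (μ) in
lemma expandC (hmom : ∀ n : ℕ, Integrable (fun x => x ^ n) μ)
    (P : ℕ → Polynomial ℝ)
    (hdeg : ∀ n, (P n).natDegree = n)
    (hlead : ∀ n, 0 < (P n).leadingCoeff)
    (horth : ∀ n m, ∫ x, (P n).eval x * (P m).eval x ∂μ = if n = m then 1 else 0) :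
    ∀ m, ∀ q : Polynomial ℂ, q.natDegree ≤ m → ∀ z : ℂ,
      q.eval z = ∑ j ∈ range (m+1),
        (∫ x, (((P j).eval x : ℝ) : ℂ) * q.eval (x:ℂ) ∂μ) * ((P j).map (algebraMap ℝ ℂ)).eval z := by
  intro m
  induction m using Nat.strong_induction_on with
  | _ m IH =>
    intro q hq z
    rcases eq_or_ne q 0 with rfl | hq0
    · simp
    · have hlc : (((P m).leadingCoeff : ℝ) : ℂ) ≠ 0 := by
        exact_mod_cast (hlead m).ne'
      obtain ⟨a, ha⟩ : ∃ a : ℂ, a = ((((P m).leadingCoeff : ℝ) : ℂ))⁻¹ * q.coeff m := ⟨_, rfl⟩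
      obtain ⟨q', hq'⟩ : ∃ q' : Polynomial ℂ,
          q' = q - Polynomial.C a * (P m).map (algebraMap ℝ ℂ) := ⟨_, rfl⟩
      have hPcdeg : ((P m).map (algebraMap ℝ ℂ)).natDegree = m := by
        rw [natDegree_map (algebraMap ℝ ℂ)]; exact hdeg m
      have h1 : ((P m).map (algebraMap ℝ ℂ)).coeff m = (((P m).leadingCoeff : ℝ) : ℂ) := by
        have hld : (P m).coeff m = (P m).leadingCoeff := by
          rw [Polynomial.leadingCoeff, hdeg m]
        rw [coeff_map, hld]
        rfl
      have hcoeffd : q'.coeff m = 0 := by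
        rw [hq', coeff_sub, coeff_C_mul, h1, ha]
        field_simp; simp
      have hq'deg : q'.natDegree ≤ m := by
        rw [hq']
        apply le_trans (natDegree_sub_le _ _)
        simp only [max_le_iff]
        exact ⟨hq, le_trans (natDegree_mul_le) (by simp [hPcdeg])⟩
      have hsplit : q = q' + Polynomial.C a * (P m).map (algebraMap ℝ ℂ) := by
        rw [hq']; ring
      -- coefficient decomposition
      have hgamma : ∀ j, (∫ x, (((P j).eval x : ℝ) : ℂ) * q.eval (x:ℂ) ∂μ)
          = (∫ x, (((P j).eval x : ℝ) : ℂ) * q'.eval (x:ℂ) ∂μ)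
            + a * (if j = m then 1 else 0) := by
        intro j
        have hint1 : Integrable (fun x => (((P j).eval x : ℝ) : ℂ) * q'.eval (x:ℂ)) μ :=
          intPq hmom _ _
        have hint2 : Integrable
            (fun x : ℝ => a * ((((P j).eval x : ℝ) : ℂ) * (((P m).eval x : ℝ) : ℂ))) μ :=
          (intPP hmom (P j) (P m)).const_mul a
        rw [← horthC μ P horth j m, ← integral_const_mul, ← integral_add hint1 hint2]
        congr 1
        funext x
        conv_lhs => rw [hsplit]
        simp only [eval_add, eval_mul, eval_C, evalPc]
        ring
      have hsum2 : ∑ j ∈ range (m+1),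
            (a * (if j = m then 1 else 0)) * ((P j).map (algebraMap ℝ ℂ)).eval z
          = a * ((P m).map (algebraMap ℝ ℂ)).eval z := by
        rw [Finset.sum_congr rfl (g := fun j =>
            if j = m then a * ((P m).map (algebraMap ℝ ℂ)).eval z else 0)
          (fun j hj => by
            by_cases h : j = m
            · subst h; simp
            · simp [h])]
        rw [Finset.sum_ite_eq' (range (m+1)) m]
        simp
      have hsum1 : ∑ j ∈ range (m+1),
            (∫ x, (((P j).eval x : ℝ) : ℂ) * q'.eval (x:ℂ) ∂μ)
              * ((P j).map (algebraMap ℝ ℂ)).eval z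
          = q'.eval z := by
        rcases eq_or_ne q' 0 with h0 | h0
        · simp [h0]
        · have hlt : q'.natDegree < m := by
            rcases lt_or_eq_of_le hq'deg with h | h
            · exact h
            · exfalso
              have := Polynomial.leadingCoeff_ne_zero.mpr h0
              rw [Polynomial.leadingCoeff, h] at this
              exact this hcoeffd
          have hm1 : m - 1 < m := by omega
          have hIH := IH (m-1) hm1 q' (by omega) z
          rw [Finset.sum_range_succ]
          have hr : m - 1 + 1 = m := by omega
          rw [hr] at hIH
          rw [← hIH]
          rw [orthC μ hmom P hdeg hlead horth q'.natDegree m hlt q' le_rfl]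
          ring
      calc q.eval z = q'.eval z + a * ((P m).map (algebraMap ℝ ℂ)).eval z := by
            conv_lhs => rw [hsplit]
            simp [eval_add, eval_mul]
        _ = _ := by
            rw [← hsum1, ← hsum2, ← Finset.sum_add_distrib]
            apply Finset.sum_congr rfl
            intro j _
            rw [hgamma j]
            ring
noncomputable def gfun : ℝ → ℂ := fun x => ((x : ℂ) - Complex.I)⁻¹

lemma gfun_ne (x : ℝ) : ((x : ℂ) - Complex.I) ≠ 0 := by
  intro h
  have := congrArg Complex.im h
  simp at this

lemma gfun_cont : Continuous gfun := by
  apply Continuous.inv₀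
  · exact (Complex.continuous_ofReal).sub continuous_const
  · exact gfun_ne

lemma gfun_bdd (x : ℝ) : ‖gfun x‖ ≤ 1 := by
  rw [gfun, norm_inv]
  have h0 : Complex.normSq ((x:ℂ) - Complex.I) = x*x + 1 := by
    simp [Complex.normSq_apply]
  have h2 := Complex.sq_norm ((x:ℂ) - Complex.I)
  have h1 : (1:ℝ) ≤ ‖(x : ℂ) - Complex.I‖ := by
    nlinarith [norm_nonneg ((x:ℂ) - Complex.I), sq_nonneg x]
  rw [inv_le_one_iff₀]
  right; exact h1

lemma normSq_gfun_le (x : ℝ) : Complex.normSq (gfun x) ≤ 1 := by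
  have h := gfun_bdd x
  rw [← Complex.sq_norm]
  nlinarith [norm_nonneg (gfun x)]

lemma intPg (hmom : ∀ n : ℕ, Integrable (fun x => x ^ n) μ) (p : Polynomial ℝ) :
    Integrable (fun x => gfun x * ((p.eval x : ℝ) : ℂ)) μ :=
  Integrable.bdd_mul ((intR hmom p).ofReal) gfun_cont.aestronglyMeasurable (ae_of_all _ gfun_bdd)

variable (μ) in
noncomputable def beta (P : ℕ → Polynomial ℝ) (n : ℕ) : ℂ :=
  ∫ x, gfun x * (((P n).eval x : ℝ) : ℂ) ∂μ

lemma bessel [IsFiniteMeasure μ]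
    (hmom : ∀ n : ℕ, Integrable (fun x => x ^ n) μ)
    (P : ℕ → Polynomial ℝ)
    (horth : ∀ n m, ∫ x, (P n).eval x * (P m).eval x ∂μ = if n = m then 1 else 0) :
    Summable (fun n => Complex.normSq (beta μ P n)) := by
  apply summable_of_sum_range_le (c := (μ Set.univ).toReal)
    (fun n => Complex.normSq_nonneg _)
  intro N
  set g := gfun with hgdef
  set β : ℕ → ℂ := beta μ P with hβdef
  set h : ℝ → ℂ := fun x => ∑ n ∈ range N, β n * (((P n).eval x : ℝ) : ℂ) with hdef
  have hce : ∀ x, (starRingEnd ℂ) (h x) = ∑ n ∈ range N, (starRingEnd ℂ) (β n) * (((P n).eval x : ℝ) : ℂ) := by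
    intro x
    rw [hdef]
    simp only [map_sum, map_mul, Complex.conj_ofReal]
  set S : ℂ := ∑ n ∈ range N, β n * (starRingEnd ℂ) (β n) with hS
  have hexp1 : (fun x => g x * (starRingEnd ℂ) (h x))
      = fun x => ∑ n ∈ range N, ((starRingEnd ℂ) (β n)) * (g x * (((P n).eval x : ℝ) : ℂ)) := by
    funext x; rw [hce x, Finset.mul_sum]; apply Finset.sum_congr rfl; intros; ring
  have hgh_int : Integrable (fun x => g x * (starRingEnd ℂ) (h x)) μ := by
    rw [hexp1]
    exact integrable_finset_sum _ (fun n _ => (intPg hmom (P n)).const_mul _)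
  have hA : ∫ x, g x * (starRingEnd ℂ) (h x) ∂μ = (starRingEnd ℂ) S := by
    rw [hexp1, integral_finset_sum _ (fun n _ => (intPg hmom (P n)).const_mul _), hS, map_sum]
    apply Finset.sum_congr rfl
    intro n _
    rw [integral_const_mul]
    have hbn : (∫ (a : ℝ), gfun a * ((((P n).eval a : ℝ)) : ℂ) ∂μ) = β n := rfl
    rw [hbn, map_mul, Complex.conj_conj]
  have hexp2 : (fun x => h x * (starRingEnd ℂ) (h x))
      = fun x => ∑ n ∈ range N, ∑ m ∈ range N,
          (β n * (starRingEnd ℂ) (β m)) * ((((P n).eval x : ℝ) : ℂ) * (((P m).eval x : ℝ) : ℂ)) := by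
    funext x
    rw [hdef, hce x, Finset.sum_mul_sum]
    apply Finset.sum_congr rfl; intros n _
    apply Finset.sum_congr rfl; intros m _
    ring
  have hhh_int : Integrable (fun x => h x * (starRingEnd ℂ) (h x)) μ := by
    rw [hexp2]
    exact integrable_finset_sum _ (fun n _ => integrable_finset_sum _
      (fun m _ => (intPP hmom (P n) (P m)).const_mul _))
  have hB : ∫ x, h x * (starRingEnd ℂ) (h x) ∂μ = S := by
    rw [hexp2, integral_finset_sum _ (fun n _ => integrable_finset_sum _
      (fun m _ => (intPP hmom (P n) (P m)).const_mul _)), hS]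
    apply Finset.sum_congr rfl
    intro n hn
    rw [integral_finset_sum _ (fun m _ => (intPP hmom (P n) (P m)).const_mul _)]
    rw [Finset.sum_congr rfl (g := fun m => if n = m then β n * (starRingEnd ℂ) (β n) else 0)
      (fun m _ => by
        rw [integral_const_mul, horthC μ P horth n m]
        by_cases hh : n = m
        · subst hh; simp
        · simp [hh])]
    rw [Finset.sum_ite_eq (range N) n]
    simp [Finset.mem_range.mp hn]
  have hSre : S.re = ∑ n ∈ range N, Complex.normSq (β n) := by
    rw [hS, Complex.re_sum]
    apply Finset.sum_congr rfl
    intro n _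
    rw [Complex.mul_conj]
    simp
  have hg2_int : Integrable (fun x => Complex.normSq (g x)) μ := by
    apply Integrable.mono' (integrable_const (1:ℝ))
      ((Complex.continuous_normSq.comp gfun_cont).aestronglyMeasurable)
    filter_upwards with x
    show ‖Complex.normSq (gfun x)‖ ≤ 1
    rw [Real.norm_eq_abs, abs_of_nonneg (Complex.normSq_nonneg _)]
    exact normSq_gfun_le x
  have hgh_int_re : Integrable (fun x => (g x * (starRingEnd ℂ) (h x)).re) μ := by
    have := hgh_int.re
    simpa [RCLike.re_to_complex] using this
  have hhh_int_re : Integrable (fun x => (h x * (starRingEnd ℂ) (h x)).re) μ := by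
    have := hhh_int.re
    simpa [RCLike.re_to_complex] using this
  have hgh_re : ∫ x, (g x * (starRingEnd ℂ) (h x)).re ∂μ = ((starRingEnd ℂ) S).re := by
    have h2 := integral_re hgh_int
    simp only [RCLike.re_to_complex] at h2
    rw [h2, hA]
  have hhh_re : ∫ x, (h x * (starRingEnd ℂ) (h x)).re ∂μ = S.re := by
    have h2 := integral_re hhh_int
    simp only [RCLike.re_to_complex] at h2
    rw [h2, hB]
  have hcross_int : Integrable (fun x => 2 * (g x * (starRingEnd ℂ) (h x)).re
      - (h x * (starRingEnd ℂ) (h x)).re) μ := (hgh_int_re.const_mul 2).sub hhh_int_re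
  have hkey : ∫ x, Complex.normSq (g x - h x) ∂μ
      = (∫ x, Complex.normSq (g x) ∂μ) - ∑ n ∈ range N, Complex.normSq (β n) := by
    have hptwise : (fun x => Complex.normSq (g x - h x))
        = fun x => Complex.normSq (g x)
            - (2 * (g x * (starRingEnd ℂ) (h x)).re - (h x * (starRingEnd ℂ) (h x)).re) := by
      funext x
      rw [Complex.normSq_sub]
      have hh : Complex.normSq (h x) = (h x * (starRingEnd ℂ) (h x)).re := by
        rw [Complex.mul_conj]; simp
      rw [hh]; ring
    rw [hptwise, integral_sub hg2_int hcross_int,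
      integral_sub (hgh_int_re.const_mul 2) hhh_int_re, integral_const_mul,
      hgh_re, hhh_re, Complex.conj_re, hSre]
    ring
  have hnonneg : 0 ≤ ∫ x, Complex.normSq (g x - h x) ∂μ :=
    integral_nonneg (fun x => Complex.normSq_nonneg _)
  have hg2_le : ∫ x, Complex.normSq (g x) ∂μ ≤ (μ Set.univ).toReal := by
    calc ∫ x, Complex.normSq (g x) ∂μ ≤ ∫ _, (1:ℝ) ∂μ :=
          integral_mono hg2_int (integrable_const 1) (fun x => normSq_gfun_le x)
      _ = (μ Set.univ).toReal := by simp; rfl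
  linarith [hkey ▸ hnonneg]

noncomputable def Pc (P : ℕ → Polynomial ℝ) (n : ℕ) : Polynomial ℂ :=
  (P n).map (algebraMap ℝ ℂ)

noncomputable def Dpoly (P : ℕ → Polynomial ℝ) (n : ℕ) : Polynomial ℂ :=
  (Pc P n) /ₘ (Polynomial.X - Polynomial.C Complex.I)

lemma aeval_eq_evalPc (P : ℕ → Polynomial ℝ) (n : ℕ) (z : ℂ) :
    Polynomial.aeval z (P n) = (Pc P n).eval z := by
  rw [Pc, aeval_def, eval_map]

lemma hD_eval (P : ℕ → Polynomial ℝ) (n : ℕ) (z : ℂ) :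
    (Dpoly P n).eval z * (z - Complex.I)
      = Polynomial.aeval z (P n) - Polynomial.aeval Complex.I (P n) := by
  have h := modByMonic_add_div (Pc P n) (X - C Complex.I)
  rw [modByMonic_X_sub_C_eq_C_eval] at h
  have := congrArg (Polynomial.eval z) h
  simp only [eval_add, eval_mul, eval_C, eval_sub, eval_X] at this
  unfold Dpoly
  rw [aeval_eq_evalPc, aeval_eq_evalPc]
  linear_combination this

lemma hD_deg (P : ℕ → Polynomial ℝ) (hdeg : ∀ n, (P n).natDegree = n) (n : ℕ) :
    (Dpoly P n).natDegree = n - 1 := by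
  rw [Dpoly, natDegree_divByMonic _ (monic_X_sub_C Complex.I)]
  rw [Pc, natDegree_map (algebraMap ℝ ℂ), hdeg, natDegree_X_sub_C]

lemma hD_eval_real (P : ℕ → Polynomial ℝ) (n : ℕ) (x : ℝ) :
    (Dpoly P n).eval (x:ℂ)
      = gfun x * ((((P n).eval x : ℝ):ℂ) - Polynomial.aeval Complex.I (P n)) := by
  have h := hD_eval P n (x:ℂ)
  have hx := gfun_ne x
  rw [gfun]
  field_simp
  rw [h, aevalPc]

variable (μ) in
noncomputable def Qv (P : ℕ → Polynomial ℝ) (n : ℕ) : ℂ :=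
  ∫ x, (Dpoly P n).eval (x:ℂ) ∂μ

lemma Qv_eq [IsFiniteMeasure μ] (hmom : ∀ n : ℕ, Integrable (fun x => x ^ n) μ)
    (P : ℕ → Polynomial ℝ) (n : ℕ) :
    Qv μ P n = beta μ P n - (Polynomial.aeval Complex.I (P n)) * ∫ x, gfun x ∂μ := by
  rw [Qv]
  have h1 : (fun x : ℝ => (Dpoly P n).eval (x:ℂ))
      = fun x => gfun x * (((P n).eval x : ℝ):ℂ)
          - (Polynomial.aeval Complex.I (P n)) * gfun x := by
    funext x
    rw [hD_eval_real]
    ring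
  rw [h1]
  have hint1 : Integrable (fun x => gfun x * (((P n).eval x : ℝ):ℂ)) μ := intPg hmom (P n)
  have hint2 : Integrable (fun x => (Polynomial.aeval Complex.I (P n)) * gfun x) μ := by
    apply Integrable.const_mul
    exact (Integrable.bdd_mul (integrable_const 1) gfun_cont.aestronglyMeasurable
      (ae_of_all _ gfun_bdd)).congr (by filter_upwards with x; simp)
  rw [integral_sub hint1 hint2, integral_const_mul, beta]

lemma star_identity [IsFiniteMeasure μ]
    (hmom : ∀ n : ℕ, Integrable (fun x => x ^ n) μ)
    (P : ℕ → Polynomial ℝ)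
    (hdeg : ∀ n, (P n).natDegree = n)
    (hlead : ∀ n, 0 < (P n).leadingCoeff)
    (horth : ∀ n m, ∫ x, (P n).eval x * (P m).eval x ∂μ = if n = m then 1 else 0)
    (n : ℕ) (z : ℂ) :
    Polynomial.aeval z (P n) = Polynomial.aeval Complex.I (P n)
      + (z - Complex.I) * ∑ j ∈ range n,
          ((Polynomial.aeval Complex.I (P j)) * Qv μ P n
            - (Polynomial.aeval Complex.I (P n)) * Qv μ P j) * Polynomial.aeval z (P j) := by
  rcases Nat.eq_zero_or_pos n with rfl | hn
  · simp
    have h0 : P 0 = Polynomial.C ((P 0).coeff 0) := eq_C_of_natDegree_le_zero (le_of_eq (hdeg 0))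
    rw [h0]
    simp
  · -- expand Dpoly P n
    have hdD : (Dpoly P n).natDegree ≤ n - 1 := le_of_eq (hD_deg P hdeg n)
    have hexp := expandC μ hmom P hdeg hlead horth (n-1) (Dpoly P n) hdD z
    have hr : n - 1 + 1 = n := by omega
    rw [hr] at hexp
    -- gamma identity
    have hgam : ∀ j, j < n → (∫ x, (((P j).eval x : ℝ):ℂ) * (Dpoly P n).eval (x:ℂ) ∂μ)
        = (Polynomial.aeval Complex.I (P j)) * Qv μ P n
          - (Polynomial.aeval Complex.I (P n)) * Qv μ P j := by
      intro j hj
      have hptw : ∀ x : ℝ, (((P j).eval x : ℝ):ℂ) * (Dpoly P n).eval (x:ℂ)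
          = (((P n).eval x : ℝ):ℂ) * (Dpoly P j).eval (x:ℂ)
            + (Polynomial.aeval Complex.I (P j)) * (Dpoly P n).eval (x:ℂ)
            - (Polynomial.aeval Complex.I (P n)) * (Dpoly P j).eval (x:ℂ) := by
        intro x
        have hx := gfun_ne x
        apply mul_right_cancel₀ hx
        have h1 := hD_eval P n (x:ℂ)
        have h2 := hD_eval P j (x:ℂ)
        have e1 : ((((P n).eval x : ℝ)):ℂ) = Polynomial.aeval (x:ℂ) (P n) := (aevalPc (P n) x).symm
        have e2 : ((((P j).eval x : ℝ)):ℂ) = Polynomial.aeval (x:ℂ) (P j) := (aevalPc (P j) x).symm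
        rw [e1, e2]
        linear_combination (Polynomial.aeval (x:ℂ) (P j) - Polynomial.aeval Complex.I (P j)) * h1
          - (Polynomial.aeval (x:ℂ) (P n) - Polynomial.aeval Complex.I (P n)) * h2
      have hint1 : Integrable (fun x => (((P n).eval x : ℝ):ℂ) * (Dpoly P j).eval (x:ℂ)) μ :=
        intPq hmom _ _
      have hint2 : Integrable (fun x : ℝ =>
          (Polynomial.aeval Complex.I (P j)) * (Dpoly P n).eval (x:ℂ)) μ :=
        (intC hmom _).const_mul _
      have hint3 : Integrable (fun x : ℝ =>
          (Polynomial.aeval Complex.I (P n)) * (Dpoly P j).eval (x:ℂ)) μ :=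
        (intC hmom _).const_mul _
      calc (∫ x, (((P j).eval x : ℝ):ℂ) * (Dpoly P n).eval (x:ℂ) ∂μ)
          = ∫ x, ((((P n).eval x : ℝ):ℂ) * (Dpoly P j).eval (x:ℂ)
            + (Polynomial.aeval Complex.I (P j)) * (Dpoly P n).eval (x:ℂ)
            - (Polynomial.aeval Complex.I (P n)) * (Dpoly P j).eval (x:ℂ)) ∂μ := by
            apply integral_congr_ae
            filter_upwards with x
            exact hptw x
        _ = (∫ x, (((P n).eval x : ℝ):ℂ) * (Dpoly P j).eval (x:ℂ) ∂μ)
            + (Polynomial.aeval Complex.I (P j)) * Qv μ P n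
            - (Polynomial.aeval Complex.I (P n)) * Qv μ P j := by
            have hint12 : Integrable (fun x : ℝ => (((P n).eval x : ℝ):ℂ) * (Dpoly P j).eval (x:ℂ)
                + (Polynomial.aeval Complex.I (P j)) * (Dpoly P n).eval (x:ℂ)) μ :=
              hint1.add hint2
            rw [integral_sub hint12 hint3, integral_add hint1 hint2,
              integral_const_mul, integral_const_mul, Qv, Qv]
        _ = (Polynomial.aeval Complex.I (P j)) * Qv μ P n
            - (Polynomial.aeval Complex.I (P n)) * Qv μ P j := by
            rw [orthC μ hmom P hdeg hlead horth (Dpoly P j).natDegree n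
              (by rw [hD_deg P hdeg j]; omega) (Dpoly P j) le_rfl]
            ring
    have hDz := hD_eval P n z
    have hsum : ∑ j ∈ range n,
          (∫ x, (((P j).eval x : ℝ):ℂ) * (Dpoly P n).eval (x:ℂ) ∂μ)
            * ((P j).map (algebraMap ℝ ℂ)).eval z
        = ∑ j ∈ range n,
          ((Polynomial.aeval Complex.I (P j)) * Qv μ P n
            - (Polynomial.aeval Complex.I (P n)) * Qv μ P j) * Polynomial.aeval z (P j) := by
      apply Finset.sum_congr rfl
      intro j hj
      rw [hgam j (Finset.mem_range.mp hj),
        show Polynomial.aeval z (P j) = ((P j).map (algebraMap ℝ ℂ)).eval z from by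
          rw [aeval_def, eval_map]]
    rw [hsum] at hexp
    linear_combination (z - Complex.I) * hexp - hDz

lemma gronwall (M u : ℕ → ℝ) (t : ℝ) (ht : 0 ≤ t)
    (hM : ∀ n, 0 ≤ M n) (hu : ∀ n, 0 ≤ u n)
    (hrec : ∀ n, u n ≤ M n + t * M n * ∑ j ∈ range n, M j * u j) :
    ∀ n, u n ≤ M n * ∏ j ∈ range n, (1 + t * (M j)^2) := by
  have hs : ∀ n, (0:ℝ) ≤ ∑ j ∈ range n, M j * u j :=
    fun n => Finset.sum_nonneg (fun j _ => mul_nonneg (hM j) (hu j))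
  have key : ∀ n, 1 + t * ∑ j ∈ range n, M j * u j ≤ ∏ j ∈ range n, (1 + t*(M j)^2) := by
    intro n
    induction n with
    | zero => simp
    | succ n ih =>
      rw [Finset.sum_range_succ, Finset.prod_range_succ]
      have hun : u n ≤ M n * (1 + t * ∑ j ∈ range n, M j * u j) := by
        calc u n ≤ M n + t * M n * ∑ j ∈ range n, M j * u j := hrec n
          _ = M n * (1 + t * ∑ j ∈ range n, M j * u j) := by ring
      have h1 : 0 ≤ 1 + t * ∑ j ∈ range n, M j * u j := by
        have := hs n; positivity
      calc 1 + t * (∑ j ∈ range n, M j * u j + M n * u n)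
          = (1 + t * ∑ j ∈ range n, M j * u j) + t * (M n * u n) := by ring
        _ ≤ (1 + t * ∑ j ∈ range n, M j * u j)
            + t * (M n * (M n * (1 + t * ∑ j ∈ range n, M j * u j))) := by
            have := mul_le_mul_of_nonneg_left hun (hM n)
            have := mul_le_mul_of_nonneg_left this ht
            linarith
        _ = (1 + t * ∑ j ∈ range n, M j * u j) * (1 + t * (M n)^2) := by ring
        _ ≤ (∏ j ∈ range n, (1 + t*(M j)^2)) * (1 + t * (M n)^2) := by
            apply mul_le_mul_of_nonneg_right ih
            have := sq_nonneg (M n); positivity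
  intro n
  calc u n ≤ M n * (1 + t * ∑ j ∈ range n, M j * u j) := by
        calc u n ≤ M n + t * M n * ∑ j ∈ range n, M j * u j := hrec n
          _ = M n * (1 + t * ∑ j ∈ range n, M j * u j) := by ring
    _ ≤ M n * ∏ j ∈ range n, (1 + t*(M j)^2) :=
        mul_le_mul_of_nonneg_left (key n) (hM n)

lemma pow_le_exp_aux (J : ℕ) {d : ℝ} (hd : 0 < d) :
    ∃ C2 : ℝ, 1 ≤ C2 ∧ ∀ t : ℝ, 0 ≤ t → (1+t)^J ≤ C2 * Real.exp (d * t) := by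
  refine ⟨2^J * (J.factorial / d^J) + 2^J, ?_, ?_⟩
  · have h1 : (1:ℝ) ≤ 2^J := one_le_pow₀ (by norm_num : (1:ℝ) ≤ 2)
    have h2 : 0 ≤ (2:ℝ)^J * (J.factorial / d^J) := by positivity
    linarith
  · intro t ht
    have hexp1 : (1:ℝ) ≤ Real.exp (d * t) := by
      rw [← Real.exp_zero]
      apply Real.exp_le_exp.mpr
      positivity
    rcases le_or_gt t 1 with h | h
    · have : (1+t)^J ≤ 2^J := by
        apply pow_le_pow_left₀ (by linarith) (by linarith)
      have h2 : 0 ≤ (2:ℝ)^J * (J.factorial / d^J) := by positivity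
      nlinarith [mul_le_mul_of_nonneg_left hexp1 h2, mul_le_mul_of_nonneg_left hexp1 (le_of_lt (by positivity : (0:ℝ) < (2:ℝ)^J))]
    · have h1 : (1+t)^J ≤ (2*t)^J := by
        apply pow_le_pow_left₀ (by linarith) (by linarith)
      have hterm : (d*t)^J / J.factorial ≤ Real.exp (d*t) := by
        calc (d*t)^J / J.factorial ≤ ∑ i ∈ range (J+1), (d*t)^i / i.factorial := by
              apply Finset.single_le_sum (f := fun i => (d*t)^i / (i.factorial:ℝ))
                (fun i _ => by positivity) (Finset.self_mem_range_succ J)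
          _ ≤ Real.exp (d*t) := Real.sum_le_exp_of_nonneg (by positivity) (J+1)
      have ht' : t^J ≤ (J.factorial / d^J) * Real.exp (d*t) := by
        have hdJ : (0:ℝ) < d^J := by positivity
        have hJf : (0:ℝ) < (J.factorial:ℝ) := by positivity
        have h2 : d^J * t^J ≤ J.factorial * Real.exp (d*t) := by
          have h3 := hterm
          rw [mul_pow, div_le_iff₀ hJf] at h3
          nlinarith [h3]
        rw [div_mul_eq_mul_div, le_div_iff₀ hdJ]
        nlinarith [h2]
      calc (1+t)^J ≤ (2*t)^J := h1
        _ = 2^J * t^J := by rw [mul_pow]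
        _ ≤ 2^J * ((J.factorial / d^J) * Real.exp (d*t)) := by
            apply mul_le_mul_of_nonneg_left ht' (by positivity)
        _ ≤ (2^J * (J.factorial / d^J) + 2^J) * Real.exp (d*t) := by
            nlinarith [hexp1, (by positivity : (0:ℝ) ≤ (2:ℝ)^J)]
lemma prod_bound (a : ℕ → ℝ) (ha : ∀ n, 0 ≤ a n) (hs : Summable a) {ε : ℝ} (hε : 0 < ε) :
    ∃ C : ℝ, 1 ≤ C ∧ ∀ (n : ℕ) (t : ℝ), 0 ≤ t →
      ∏ j ∈ range n, (1 + t * a j) ≤ C * Real.exp (ε * t) := by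
  obtain ⟨J, hJ⟩ : ∃ J, (∑' i, a i) - ∑ j ∈ range J, a j ≤ ε/2 := by
    have h1 : Tendsto (fun n => ∑ j ∈ range n, a j) atTop (nhds (∑' i, a i)) :=
      hs.hasSum.tendsto_sum_nat
    have h2 : ∀ᶠ n in atTop, (∑' i, a i) - ε/2 < ∑ j ∈ range n, a j :=
      h1.eventually (eventually_gt_nhds (by linarith))
    obtain ⟨J, hJ'⟩ := h2.exists
    exact ⟨J, by linarith⟩
  have tail : ∀ n, J ≤ n → ∑ j ∈ Finset.Ico J n, a j ≤ ε/2 := by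
    intro n hn
    have e1 : (∑ j ∈ range J, a j) + ∑ j ∈ Finset.Ico J n, a j = ∑ j ∈ range n, a j :=
      Finset.sum_range_add_sum_Ico a hn
    have e2 : ∑ j ∈ range n, a j ≤ ∑' i, a i := Summable.sum_le_tsum (range n) (fun i _ => ha i) hs
    linarith
  obtain ⟨C2, hC2one, hC2⟩ := pow_le_exp_aux J (show (0:ℝ) < ε/2 by linarith)
  refine ⟨C2 * ∏ j ∈ range J, (1 + a j), ?_, ?_⟩
  · have h1 : (1:ℝ) ≤ ∏ j ∈ range J, (1 + a j) := by
      have := Finset.prod_le_prod (s := range J) (f := fun _ => (1:ℝ))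
        (g := fun j => 1 + a j) (fun j _ => by norm_num)
        (fun j _ => by have := ha j; show (1:ℝ) ≤ 1 + a j; linarith)
      simpa using this
    nlinarith
  · intro n t ht
    have hfac_nonneg : ∀ j, (0:ℝ) ≤ 1 + t * a j := by
      intro j
      have := mul_nonneg ht (ha j)
      linarith
    have step1 : ∏ j ∈ range n, (1 + t * a j)
        ≤ (∏ j ∈ range J, (1 + t * a j)) * Real.exp (ε/2 * t) := by
      have hexp1 : (1:ℝ) ≤ Real.exp (ε/2 * t) := by
        rw [← Real.exp_zero]
        apply Real.exp_le_exp.mpr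
        positivity
      rcases le_or_gt n J with h | h
      · have h1 : ∏ j ∈ range n, (1 + t * a j) ≤ ∏ j ∈ range J, (1 + t * a j) := by
          have hsplit : (∏ j ∈ range n, (1 + t * a j)) * ∏ j ∈ Finset.Ico n J, (1 + t * a j)
              = ∏ j ∈ range J, (1 + t * a j) :=
            Finset.prod_range_mul_prod_Ico _ h
          have hico1 : (1:ℝ) ≤ ∏ j ∈ Finset.Ico n J, (1 + t * a j) := by
            have := Finset.prod_le_prod (s := Finset.Ico n J) (f := fun _ => (1:ℝ))
              (g := fun j => 1 + t * a j) (fun j _ => by norm_num)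
              (fun j _ => by have := mul_nonneg ht (ha j); show (1:ℝ) ≤ 1 + t * a j; linarith)
            simpa using this
          have hnn : (0:ℝ) ≤ ∏ j ∈ range n, (1 + t * a j) :=
            Finset.prod_nonneg (fun j _ => hfac_nonneg j)
          nlinarith
        have h2 : (0:ℝ) ≤ ∏ j ∈ range J, (1 + t * a j) :=
          Finset.prod_nonneg (fun j _ => hfac_nonneg j)
        nlinarith
      · have hsplit : (∏ j ∈ range J, (1 + t * a j)) * ∏ j ∈ Finset.Ico J n, (1 + t * a j)
            = ∏ j ∈ range n, (1 + t * a j) :=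
          Finset.prod_range_mul_prod_Ico _ (le_of_lt h)
        have hico : ∏ j ∈ Finset.Ico J n, (1 + t * a j) ≤ Real.exp (ε/2 * t) := by
          calc ∏ j ∈ Finset.Ico J n, (1 + t * a j)
              ≤ ∏ j ∈ Finset.Ico J n, Real.exp (t * a j) := by
                apply Finset.prod_le_prod (fun j _ => hfac_nonneg j)
                intro j _
                have := Real.add_one_le_exp (t * a j)
                linarith
            _ = Real.exp (∑ j ∈ Finset.Ico J n, t * a j) := (Real.exp_sum _ _).symm
            _ ≤ Real.exp (ε/2 * t) := by
                apply Real.exp_le_exp.mpr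
                rw [← Finset.mul_sum]
                calc t * ∑ j ∈ Finset.Ico J n, a j ≤ t * (ε/2) :=
                      mul_le_mul_of_nonneg_left (tail n (le_of_lt h)) ht
                  _ = ε/2 * t := by ring
        rw [← hsplit]
        apply mul_le_mul_of_nonneg_left hico
          (Finset.prod_nonneg (fun j _ => hfac_nonneg j))
    have step2 : ∏ j ∈ range J, (1 + t * a j)
        ≤ (1+t)^J * ∏ j ∈ range J, (1 + a j) := by
      calc ∏ j ∈ range J, (1 + t * a j) ≤ ∏ j ∈ range J, ((1 + a j) * (1+t)) := by
            apply Finset.prod_le_prod (fun j _ => hfac_nonneg j)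
            intro j _
            have h1 := ha j
            nlinarith
        _ = (∏ j ∈ range J, (1 + a j)) * (1+t)^J := by
            rw [Finset.prod_mul_distrib, Finset.prod_const, Finset.card_range]
        _ = (1+t)^J * ∏ j ∈ range J, (1 + a j) := by ring
    have step3 : (1+t)^J ≤ C2 * Real.exp (ε/2 * t) := hC2 t ht
    have hprodJ_nonneg : (0:ℝ) ≤ ∏ j ∈ range J, (1 + a j) :=
      Finset.prod_nonneg (fun j _ => by have := ha j; linarith)
    have hexp_pos : (0:ℝ) < Real.exp (ε/2 * t) := Real.exp_pos _
    calc ∏ j ∈ range n, (1 + t * a j)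
        ≤ (∏ j ∈ range J, (1 + t * a j)) * Real.exp (ε/2 * t) := step1
      _ ≤ ((1+t)^J * ∏ j ∈ range J, (1 + a j)) * Real.exp (ε/2 * t) :=
          mul_le_mul_of_nonneg_right step2 (le_of_lt hexp_pos)
      _ ≤ ((C2 * Real.exp (ε/2 * t)) * ∏ j ∈ range J, (1 + a j)) * Real.exp (ε/2 * t) := by
          apply mul_le_mul_of_nonneg_right ?_ (le_of_lt hexp_pos)
          exact mul_le_mul_of_nonneg_right step3 hprodJ_nonneg
      _ = (C2 * ∏ j ∈ range J, (1 + a j)) * (Real.exp (ε/2 * t) * Real.exp (ε/2 * t)) := by ring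
      _ = (C2 * ∏ j ∈ range J, (1 + a j)) * Real.exp (ε * t) := by
          rw [← Real.exp_add]
          ring_nf
lemma coeff_bound (q : Polynomial ℝ) (n : ℕ) (hqd : q.natDegree ≤ n) (k : ℕ) (hk : k ≤ n)
    (r : ℝ) (hr : 0 < r) (B : ℝ)
    (hB : ∀ z : ℂ, ‖z‖ = r → ‖Polynomial.aeval z q‖ ≤ B) :
    |q.coeff k| * r^k ≤ B := by
  set N := n + 1 with hN
  set ω : ℂ := Complex.exp (2 * Real.pi * Complex.I / N) with hω
  have hprim : IsPrimitiveRoot ω N := Complex.isPrimitiveRoot_exp N (by omega)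
  have hωnorm : ‖ω‖ = 1 := by
    rw [hω, Complex.norm_exp]
    have h0 : (2 * (Real.pi:ℂ) * Complex.I / N).re = 0 := by
      simp [Complex.div_re]
    rw [h0, Real.exp_zero]
  have haev : ∀ z : ℂ, Polynomial.aeval z q = ∑ l ∈ range N, ((q.coeff l : ℝ):ℂ) * z^l := by
    intro z
    rw [aeval_def, ← eval_map]
    have hdm : (q.map (algebraMap ℝ ℂ)).natDegree < N := by
      rw [natDegree_map (algebraMap ℝ ℂ)]
      omega
    rw [eval_eq_sum_range' hdm]
    apply Finset.sum_congr rfl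
    intro l _
    rw [coeff_map]
    rfl
  have hpow : ∀ j l : ℕ, ((r:ℂ) * ω^j)^l * (ω^j)^(N-k) = (r:ℂ)^l * (ω^(l+(N-k)))^j := by
    intro j l
    rw [mul_pow, mul_assoc, ← pow_mul ω j l, ← pow_mul ω j (N-k), ← pow_add,
      ← Nat.left_distrib, mul_comm j (l+(N-k)), pow_mul]
  have hinner : ∀ l ∈ range N, (∑ j ∈ range N, (ω^(l+(N-k)))^j)
      = if l = k then (N:ℂ) else 0 := by
    intro l hl
    by_cases hlk : l = k
    · rw [if_pos hlk, hlk]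
      have he : k + (N - k) = N := by omega
      rw [he, hprim.pow_eq_one]
      simp
    · have hne : ω^(l+(N-k)) ≠ 1 := by
        intro h1
        have hdvd := (hprim.pow_eq_one_iff_dvd (l+(N-k))).mp h1
        obtain ⟨c, hc⟩ := hdvd
        have hlN : l < N := Finset.mem_range.mp hl
        rcases c with _ | c
        · omega
        · rcases c with _ | c
          · omega
          · have h2 : 2*N ≤ N * (c+1+1) := by nlinarith
            omega
      rw [if_neg hlk, geom_sum_eq hne]
      have hnum : (ω^(l+(N-k)))^N = 1 := by
        rw [← pow_mul, mul_comm, pow_mul, hprim.pow_eq_one, one_pow]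
      rw [hnum]
      simp
  have key : ∑ j ∈ range N, (Polynomial.aeval ((r:ℂ) * ω^j) q) * (ω^j)^(N - k)
      = (((q.coeff k : ℝ):ℂ) * (r:ℂ)^k) * N := by
    calc ∑ j ∈ range N, (Polynomial.aeval ((r:ℂ) * ω^j) q) * (ω^j)^(N - k)
        = ∑ j ∈ range N, ∑ l ∈ range N,
            (((q.coeff l : ℝ):ℂ) * (r:ℂ)^l) * (ω^(l+(N-k)))^j := by
          apply Finset.sum_congr rfl
          intro j _
          rw [haev, Finset.sum_mul]
          apply Finset.sum_congr rfl
          intro l _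
          rw [mul_assoc, hpow j l, ← mul_assoc]
      _ = ∑ l ∈ range N, ∑ j ∈ range N,
            (((q.coeff l : ℝ):ℂ) * (r:ℂ)^l) * (ω^(l+(N-k)))^j := Finset.sum_comm
      _ = ∑ l ∈ range N, (((q.coeff l : ℝ):ℂ) * (r:ℂ)^l) * ∑ j ∈ range N, (ω^(l+(N-k)))^j := by
          apply Finset.sum_congr rfl
          intro l _
          rw [Finset.mul_sum]
      _ = ∑ l ∈ range N, (if l = k then (((q.coeff k : ℝ):ℂ) * (r:ℂ)^k) * (N:ℂ) else 0) := by
          apply Finset.sum_congr rfl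
          intro l hl
          rw [hinner l hl]
          by_cases hlk : l = k
          · subst hlk; simp
          · simp [hlk]
      _ = (((q.coeff k : ℝ):ℂ) * (r:ℂ)^k) * N := by
          rw [Finset.sum_ite_eq' (range N) k]
          simp [Finset.mem_range.mpr (by omega : k < N)]
  have hnorm_le : ‖∑ j ∈ range N, (Polynomial.aeval ((r:ℂ) * ω^j) q) * (ω^j)^(N - k)‖
      ≤ N * B := by
    calc ‖∑ j ∈ range N, (Polynomial.aeval ((r:ℂ) * ω^j) q) * (ω^j)^(N - k)‖
        ≤ ∑ j ∈ range N, ‖(Polynomial.aeval ((r:ℂ) * ω^j) q) * (ω^j)^(N - k)‖ :=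
          norm_sum_le _ _
      _ ≤ ∑ j ∈ range N, B := by
          apply Finset.sum_le_sum
          intro j _
          rw [norm_mul, norm_pow, norm_pow, hωnorm]
          simp only [one_pow, mul_one]
          apply hB
          rw [norm_mul, norm_pow, hωnorm, one_pow, mul_one, Complex.norm_real,
            Real.norm_eq_abs, abs_of_pos hr]
      _ = N * B := by
          rw [Finset.sum_const, Finset.card_range]
          simp
  rw [key] at hnorm_le
  have hnval : ‖(((q.coeff k : ℝ):ℂ) * (r:ℂ)^k) * (N:ℂ)‖ = (|q.coeff k| * r^k) * N := by
    rw [norm_mul, norm_mul, norm_pow, Complex.norm_real, Complex.norm_real,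
      Real.norm_eq_abs, Real.norm_eq_abs, abs_of_pos hr, Complex.norm_natCast]
  rw [hnval] at hnorm_le
  have hNpos : (0:ℝ) < N := by positivity
  nlinarith
variable (μ) in
noncomputable def mseq (P : ℕ → Polynomial ℝ) (n : ℕ) : ℝ :=
  ‖Polynomial.aeval Complex.I (P n)‖ + ‖Qv μ P n‖

lemma mseq_nonneg (P : ℕ → Polynomial ℝ) (n : ℕ) : 0 ≤ mseq μ P n :=
  add_nonneg (norm_nonneg _) (norm_nonneg _)

lemma mseq_sq_summable [IsFiniteMeasure μ]
    (hmom : ∀ n : ℕ, Integrable (fun x => x ^ n) μ)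
    (P : ℕ → Polynomial ℝ)
    (horth : ∀ n m, ∫ x, (P n).eval x * (P m).eval x ∂μ = if n = m then 1 else 0)
    (hindet : ∀ z : ℂ, Summable fun n => ‖Polynomial.aeval z (P n)‖ ^ 2) :
    Summable (fun n => (mseq μ P n)^2) := by
  have hp : Summable (fun n => ‖Polynomial.aeval Complex.I (P n)‖^2) := by
    simpa using hindet Complex.I
  have hb : Summable (fun n => ‖beta μ P n‖^2) := by
    have := bessel hmom P horth
    have he : ∀ n : ℕ, Complex.normSq (beta μ P n) = ‖beta μ P n‖^2 := by
      intro n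
      rw [Complex.sq_norm]
    simpa [he] using this
  set M0 : ℝ := ‖∫ x, gfun x ∂μ‖ with hM0
  have hq : ∀ n, ‖Qv μ P n‖ ≤ ‖beta μ P n‖ + ‖Polynomial.aeval Complex.I (P n)‖ * M0 := by
    intro n
    rw [Qv_eq hmom P n]
    apply le_trans (norm_sub_le _ _)
    rw [norm_mul]
  have hRHS : Summable (fun n => (3*‖Polynomial.aeval Complex.I (P n)‖^2
      + 3*‖beta μ P n‖^2) + (3*M0^2)*‖Polynomial.aeval Complex.I (P n)‖^2) :=
    ((hp.mul_left 3).add (hb.mul_left 3)).add (hp.mul_left _)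
  apply Summable.of_nonneg_of_le (fun n => sq_nonneg _) ?_ hRHS
  intro n
  have h1 := hq n
  have h2 : (0:ℝ) ≤ ‖Polynomial.aeval Complex.I (P n)‖ := norm_nonneg _
  have h3 : (0:ℝ) ≤ ‖beta μ P n‖ := norm_nonneg _
  have h4 : (0:ℝ) ≤ ‖Qv μ P n‖ := norm_nonneg _
  have h5 : (0:ℝ) ≤ M0 := norm_nonneg _
  rw [mseq]
  nlinarith [sq_nonneg (‖Polynomial.aeval Complex.I (P n)‖ - ‖beta μ P n‖),
    sq_nonneg (‖Polynomial.aeval Complex.I (P n)‖ - ‖Polynomial.aeval Complex.I (P n)‖*M0),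
    sq_nonneg (‖beta μ P n‖ - ‖Polynomial.aeval Complex.I (P n)‖*M0),
    mul_nonneg h2 h5, mul_nonneg (mul_nonneg h2 h2) h5]

lemma growth [IsFiniteMeasure μ]
    (hmom : ∀ n : ℕ, Integrable (fun x => x ^ n) μ)
    (P : ℕ → Polynomial ℝ)
    (hdeg : ∀ n, (P n).natDegree = n)
    (hlead : ∀ n, 0 < (P n).leadingCoeff)
    (horth : ∀ n m, ∫ x, (P n).eval x * (P m).eval x ∂μ = if n = m then 1 else 0)
    (hindet : ∀ z : ℂ, Summable fun n => ‖Polynomial.aeval z (P n)‖ ^ 2)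
    {ε : ℝ} (hε : 0 < ε) :
    ∃ C : ℝ, 1 ≤ C ∧ ∀ (n : ℕ) (z : ℂ),
      ‖Polynomial.aeval z (P n)‖ ≤ C * mseq μ P n * Real.exp (ε * ‖z‖) := by
  obtain ⟨C, hC1, hC⟩ := prod_bound (fun n => (mseq μ P n)^2) (fun n => sq_nonneg _)
    (mseq_sq_summable hmom P horth hindet) hε
  have hexpe : (1:ℝ) ≤ Real.exp ε := by
    rw [← Real.exp_zero]
    exact Real.exp_le_exp.mpr (le_of_lt hε)
  refine ⟨C * Real.exp ε, by nlinarith, ?_⟩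
  intro n z
  set t := ‖z - Complex.I‖ with htdef
  have ht : 0 ≤ t := norm_nonneg _
  have hrec : ∀ m, ‖Polynomial.aeval z (P m)‖
      ≤ mseq μ P m + t * mseq μ P m * ∑ j ∈ range m, mseq μ P j * ‖Polynomial.aeval z (P j)‖ := by
    intro m
    have hid := star_identity hmom P hdeg hlead horth m z
    have hstep : ‖Polynomial.aeval z (P m)‖
        ≤ ‖Polynomial.aeval Complex.I (P m)‖ + t * ‖∑ j ∈ range m,
            ((Polynomial.aeval Complex.I (P j)) * Qv μ P m
              - (Polynomial.aeval Complex.I (P m)) * Qv μ P j) * Polynomial.aeval z (P j)‖ := by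
      rw [hid]
      apply le_trans (norm_add_le _ _)
      rw [norm_mul]
    apply le_trans hstep
    apply add_le_add
    · rw [mseq]
      exact le_add_of_nonneg_right (norm_nonneg _)
    · have hsum : ‖∑ j ∈ range m,
          ((Polynomial.aeval Complex.I (P j)) * Qv μ P m
            - (Polynomial.aeval Complex.I (P m)) * Qv μ P j) * Polynomial.aeval z (P j)‖
          ≤ ∑ j ∈ range m, (mseq μ P m * mseq μ P j) * ‖Polynomial.aeval z (P j)‖ := by
        apply le_trans (norm_sum_le _ _)
        apply Finset.sum_le_sum
        intro j _
        rw [norm_mul]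
        apply mul_le_mul_of_nonneg_right ?_ (norm_nonneg _)
        apply le_trans (norm_sub_le _ _)
        rw [norm_mul, norm_mul]
        rw [mseq, mseq]
        nlinarith [norm_nonneg (Polynomial.aeval Complex.I (P j)),
          norm_nonneg (Polynomial.aeval Complex.I (P m)),
          norm_nonneg (Qv μ P j), norm_nonneg (Qv μ P m),
          mul_nonneg (norm_nonneg (Polynomial.aeval Complex.I (P j))) (norm_nonneg (Polynomial.aeval Complex.I (P m))),
          mul_nonneg (norm_nonneg (Qv μ P j)) (norm_nonneg (Qv μ P m))]
      have heq : ∑ j ∈ range m, (mseq μ P m * mseq μ P j) * ‖Polynomial.aeval z (P j)‖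
          = mseq μ P m * ∑ j ∈ range m, mseq μ P j * ‖Polynomial.aeval z (P j)‖ := by
        rw [Finset.mul_sum]
        apply Finset.sum_congr rfl
        intro j _
        ring
      calc t * ‖∑ j ∈ range m, ((Polynomial.aeval Complex.I (P j)) * Qv μ P m
            - (Polynomial.aeval Complex.I (P m)) * Qv μ P j) * Polynomial.aeval z (P j)‖
          ≤ t * (mseq μ P m * ∑ j ∈ range m, mseq μ P j * ‖Polynomial.aeval z (P j)‖) := by
            apply mul_le_mul_of_nonneg_left ?_ ht
            rw [← heq]
            exact hsum
        _ = t * mseq μ P m * ∑ j ∈ range m, mseq μ P j * ‖Polynomial.aeval z (P j)‖ := by ring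
  have hg := gronwall (mseq μ P) (fun m => ‖Polynomial.aeval z (P m)‖) t ht
    (mseq_nonneg P) (fun m => norm_nonneg _) hrec n
  have hprod := hC n t ht
  have htz : t ≤ ‖z‖ + 1 := by
    rw [htdef]
    calc ‖z - Complex.I‖ ≤ ‖z‖ + ‖Complex.I‖ := norm_sub_le _ _
      _ = ‖z‖ + 1 := by rw [Complex.norm_I]
  have hexp2 : Real.exp (ε * t) ≤ Real.exp (ε * ‖z‖ + ε) := by
    apply Real.exp_le_exp.mpr
    nlinarith
  calc ‖Polynomial.aeval z (P n)‖
      ≤ mseq μ P n * ∏ j ∈ range n, (1 + t * (mseq μ P j)^2) := hg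
    _ ≤ mseq μ P n * (C * Real.exp (ε * t)) :=
        mul_le_mul_of_nonneg_left hprod (mseq_nonneg P n)
    _ ≤ mseq μ P n * (C * Real.exp (ε * ‖z‖ + ε)) := by
        apply mul_le_mul_of_nonneg_left ?_ (mseq_nonneg P n)
        apply mul_le_mul_of_nonneg_left hexp2 (by linarith)
    _ = (C * Real.exp ε) * mseq μ P n * Real.exp (ε * ‖z‖) := by
        rw [Real.exp_add]
        ring

end Aux

/-- In the indeterminate case, `c_k = (∑_{n≥k} b_{k,n}²)^{1/2}` satisfies
`lim_k k · c_k^{1/k} = 0`. -/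
theorem diagonal_coeff_rapid_decay
    (μ : Measure ℝ)
    (hmom : ∀ n : ℕ, Integrable (fun x => x ^ n) μ)
    (hsupp : ∀ p : Polynomial ℝ, p ≠ 0 → 0 < ∫ x, (p.eval x) ^ 2 ∂μ)
    (P : ℕ → Polynomial ℝ)
    (hdeg : ∀ n, (P n).natDegree = n)
    (hlead : ∀ n, 0 < (P n).leadingCoeff)
    (horth : ∀ n m, ∫ x, (P n).eval x * (P m).eval x ∂μ = if n = m then 1 else 0)
    (hindet : ∀ z : ℂ, Summable fun n => ‖Polynomial.aeval z (P n)‖ ^ 2)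
    (c : ℕ → ℝ) (hc : ∀ k, c k = Real.sqrt (∑' n : ℕ, ((P n).coeff k) ^ 2)) :
    Tendsto (fun k : ℕ => (k : ℝ) * (c k) ^ ((k : ℝ)⁻¹)) atTop (nhds 0) := by
  haveI : IsFiniteMeasure μ := by
    constructor
    have h := (integrable_const_iff (c := (1:ℝ))).mp (by simpa using hmom 0)
    rcases h with h | h
    · norm_num at h
    · exact h.measure_univ_lt_top
  have main : ∀ ε : ℝ, 0 < ε → ∃ K : ℝ, 1 ≤ K ∧ ∀ (k : ℕ) (r : ℝ), 0 < r →
      c k ≤ K * Real.exp (ε * r) / r^k := by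
    intro ε hε
    obtain ⟨C, hC1, hC⟩ := growth hmom P hdeg hlead horth hindet hε
    set M := ∑' n, (mseq μ P n)^2 with hM
    have hMsum : Summable (fun n => (mseq μ P n)^2) := mseq_sq_summable hmom P horth hindet
    refine ⟨C * (Real.sqrt M + 1), ?_, ?_⟩
    · have h0 : 0 ≤ Real.sqrt M := Real.sqrt_nonneg _
      nlinarith
    intro k r hr
    have hcoeff : ∀ n : ℕ, ((P n).coeff k)^2
        ≤ (C * Real.exp (ε*r)/r^k)^2 * (mseq μ P n)^2 := by
      intro n
      rcases lt_or_ge n k with h | h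
      · have h0 : (P n).coeff k = 0 := coeff_eq_zero_of_natDegree_lt (by rw [hdeg n]; omega)
        rw [h0]
        norm_num
        positivity
      · have hb := coeff_bound (P n) n (le_of_eq (hdeg n)) k h r hr
          (C * mseq μ P n * Real.exp (ε*r))
          (fun z hz => by
            have h1 := hC n z
            rw [hz] at h1
            exact h1)
        have h2 : |(P n).coeff k| ≤ C * mseq μ P n * Real.exp (ε*r) / r^k := by
          rw [le_div_iff₀ (by positivity)]
          exact hb
        calc ((P n).coeff k)^2 = |(P n).coeff k|^2 := (sq_abs _).symm
          _ ≤ (C * mseq μ P n * Real.exp (ε*r) / r^k)^2 :=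
              pow_le_pow_left₀ (abs_nonneg _) h2 2
          _ = (C * Real.exp (ε*r)/r^k)^2 * (mseq μ P n)^2 := by ring
    have hsumR : Summable (fun n => (C * Real.exp (ε*r)/r^k)^2 * (mseq μ P n)^2) :=
      hMsum.mul_left _
    have hsumL : Summable (fun n => ((P n).coeff k)^2) :=
      Summable.of_nonneg_of_le (fun n => sq_nonneg _) hcoeff hsumR
    have htsum : ∑' n, ((P n).coeff k)^2 ≤ (C * Real.exp (ε*r)/r^k)^2 * M := by
      calc ∑' n, ((P n).coeff k)^2
          ≤ ∑' n, (C * Real.exp (ε*r)/r^k)^2 * (mseq μ P n)^2 :=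
            Summable.tsum_le_tsum hcoeff hsumL hsumR
        _ = (C * Real.exp (ε*r)/r^k)^2 * M := by rw [tsum_mul_left]
    rw [hc k]
    calc Real.sqrt (∑' n, ((P n).coeff k)^2)
        ≤ Real.sqrt ((C * Real.exp (ε*r)/r^k)^2 * M) := Real.sqrt_le_sqrt htsum
      _ = (C * Real.exp (ε*r)/r^k) * Real.sqrt M := by
          rw [Real.sqrt_mul (sq_nonneg _), Real.sqrt_sq (by positivity)]
      _ ≤ C * (Real.sqrt M + 1) * Real.exp (ε*r)/r^k := by
          rw [div_mul_eq_mul_div, div_le_div_iff₀ (by positivity) (by positivity)]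
          nlinarith [Real.exp_pos (ε*r), Real.sqrt_nonneg M, pow_pos hr k,
            mul_pos (mul_pos (lt_of_lt_of_le one_pos hC1) (Real.exp_pos (ε*r))) (pow_pos hr k)]
  rw [Metric.tendsto_atTop]
  intro δ hδ
  have hε : (0:ℝ) < δ/10 := by linarith
  obtain ⟨K, hK1, hK⟩ := main (δ/10) hε
  obtain ⟨N0, hN0⟩ : ∃ N0 : ℕ, K < 2^N0 := pow_unbounded_of_one_lt K one_lt_two
  refine ⟨max N0 1, ?_⟩
  intro k hk
  have hk1 : 1 ≤ k := le_trans (le_max_right _ _) hk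
  have hkN : N0 ≤ k := le_trans (le_max_left _ _) hk
  have hkR : (1:ℝ) ≤ (k:ℝ) := by exact_mod_cast hk1
  have hkpos : (0:ℝ) < (k:ℝ) := by linarith
  have hk0 : ((k:ℝ)) ≠ 0 := by positivity
  have hcnn : 0 ≤ c k := by rw [hc k]; exact Real.sqrt_nonneg _
  have hterm_nn : 0 ≤ (k:ℝ) * c k ^ ((k:ℝ)⁻¹) :=
    mul_nonneg (by positivity) (Real.rpow_nonneg hcnn _)
  rw [dist_zero_right, Real.norm_eq_abs, abs_of_nonneg hterm_nn]
  -- the crucial bound with r = k / ε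
  have hckb : c k ≤ K * (Real.exp 1 * (δ/10) / k)^k := by
    have h := hK k ((k:ℝ)/(δ/10)) (by positivity)
    have he1 : (δ/10) * ((k:ℝ)/(δ/10)) = (k:ℝ) := by
      field_simp
    rw [he1] at h
    have he2 : Real.exp ((k:ℝ)) = (Real.exp 1)^k := by
      rw [← Real.exp_nat_mul]
      norm_num
    rw [he2] at h
    calc c k ≤ K * (Real.exp 1)^k / ((k:ℝ)/(δ/10))^k := h
      _ = K * (Real.exp 1 * (δ/10) / k)^k := by
          field_simp
          rw [← mul_pow]
          congr 1
          field_simp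
  have hD : (0:ℝ) ≤ Real.exp 1 * (δ/10) / k := by positivity
  have hrc : c k ^ ((k:ℝ)⁻¹) ≤ K ^ ((k:ℝ)⁻¹) * (Real.exp 1 * (δ/10) / k) := by
    have h1 : c k ^ ((k:ℝ)⁻¹) ≤ (K * (Real.exp 1 * (δ/10) / k)^k) ^ ((k:ℝ)⁻¹) :=
      Real.rpow_le_rpow hcnn hckb (by positivity)
    have h2 : (K * (Real.exp 1 * (δ/10) / k)^k) ^ ((k:ℝ)⁻¹)
        = K ^ ((k:ℝ)⁻¹) * (Real.exp 1 * (δ/10) / k) := by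
      rw [Real.mul_rpow (by linarith) (by positivity)]
      congr 1
      rw [← Real.rpow_natCast (Real.exp 1 * (δ/10) / (k:ℝ)) k, ← Real.rpow_mul hD,
        mul_inv_cancel₀ (by exact_mod_cast hk0), Real.rpow_one]
    rw [← h2]
    exact h1
  have hKk : K ^ ((k:ℝ)⁻¹) ≤ 2 := by
    have h2k : K ≤ 2^k :=
      le_of_lt (lt_of_lt_of_le hN0 (pow_le_pow_right₀ one_le_two hkN))
    calc K ^ ((k:ℝ)⁻¹) ≤ ((2:ℝ)^k) ^ ((k:ℝ)⁻¹) :=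
        Real.rpow_le_rpow (by linarith) h2k (by positivity)
      _ = 2 := by
        rw [← Real.rpow_natCast (2:ℝ) k, ← Real.rpow_mul (by norm_num),
          mul_inv_cancel₀ (by exact_mod_cast hk0), Real.rpow_one]
  have hexp1 : Real.exp 1 < 2.7182818286 := Real.exp_one_lt_d9
  calc (k:ℝ) * c k ^ ((k:ℝ)⁻¹)
      ≤ (k:ℝ) * (K ^ ((k:ℝ)⁻¹) * (Real.exp 1 * (δ/10) / k)) :=
        mul_le_mul_of_nonneg_left hrc (by positivity)
    _ = K ^ ((k:ℝ)⁻¹) * (Real.exp 1 * (δ/10)) := by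
        field_simp
    _ ≤ 2 * (Real.exp 1 * (δ/10)) := by
        apply mul_le_mul_of_nonneg_right hKk
        positivity
    _ < δ := by nlinarith [Real.exp_pos 1]
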